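/- Let P, A, B be C¹ functions near w₀ ∈ ℝ^d with values in the N×N complex matrices such that A(w₀) and B(w₀) are invertible. If P is of principal type at w₀, then the pointwise matrix product A P B is of principal type at w₀. Moreover, P is of principal type at w₀ if and only if the pointwise conjugate transpose P* is of principal type at w₀. -/

import Mathlib

open Matrix

/-- The directional derivative `∂_ν P(w₀)` of a matrix-valued function, taken entrywise. -/
noncomputable def dirDeriv {d N : ℕ} (P : EuclideanSpace ℝ (Fin d) → Matrix (Fin N) (Fin N) ℂ)
    (w₀ ν : EuclideanSpace ℝ (Fin d)) : Matrix (Fin N) (Fin N) ℂ :=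
  fun i j => deriv (fun t : ℝ => P (w₀ + t • ν) i j) 0

/-- `P` is of principal type at `w₀` if for some direction `ν` the map
`Ker P(w₀) ∋ u ↦ ∂_ν P(w₀) u ∈ ℂ^N / Ran P(w₀)` is a bijection. -/
noncomputable def IsPrincipalTypeAt {d N : ℕ}
    (P : EuclideanSpace ℝ (Fin d) → Matrix (Fin N) (Fin N) ℂ)
    (w₀ : EuclideanSpace ℝ (Fin d)) : Prop :=
  ∃ ν : EuclideanSpace ℝ (Fin d),
    Function.Bijective
      ((LinearMap.range (Matrix.toEuclideanLin (P w₀))).mkQ ∘ₗ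
        Matrix.toEuclideanLin (dirDeriv P w₀ ν) ∘ₗ
        (LinearMap.ker (Matrix.toEuclideanLin (P w₀))).subtype)

namespace PTAux

variable {N : ℕ}

local notation "E" => EuclideanSpace ℂ (Fin N)

/-- The composed map appearing in the principal-type condition. -/
noncomputable def Phi (T D : E →ₗ[ℂ] E) :
    LinearMap.ker T →ₗ[ℂ] ((EuclideanSpace ℂ (Fin N)) ⧸ LinearMap.range T) :=
  (LinearMap.range T).mkQ ∘ₗ D ∘ₗ (LinearMap.ker T).subtype

/-- The injectivity condition. -/
def InjCond (T D : E →ₗ[ℂ] E) : Prop :=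
  ∀ u : E, T u = 0 → D u ∈ LinearMap.range T → u = 0

lemma finrank_eq (T : E →ₗ[ℂ] E) :
    Module.finrank ℂ (LinearMap.ker T) =
      Module.finrank ℂ ((EuclideanSpace ℂ (Fin N)) ⧸ LinearMap.range T) := by
  have h1 := LinearMap.finrank_range_add_finrank_ker T
  have h2 := Submodule.finrank_quotient_add_finrank (LinearMap.range T)
  omega

lemma bij_iff_inj (T D : E →ₗ[ℂ] E) :
    Function.Bijective (Phi T D) ↔ Function.Injective (Phi T D) := by
  constructor
  · exact fun h => h.1
  · intro h
    exact ⟨h, (LinearMap.injective_iff_surjective_of_finrank_eq_finrank (finrank_eq T)).mp h⟩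

lemma bij_iff_surj (T D : E →ₗ[ℂ] E) :
    Function.Bijective (Phi T D) ↔ Function.Surjective (Phi T D) := by
  constructor
  · exact fun h => h.2
  · intro h
    exact ⟨(LinearMap.injective_iff_surjective_of_finrank_eq_finrank (finrank_eq T)).mpr h, h⟩

lemma inj_iff (T D : E →ₗ[ℂ] E) : Function.Injective (Phi T D) ↔ InjCond T D := by
  rw [← LinearMap.ker_eq_bot]
  constructor
  · intro h u hTu hDu
    have hmem : (⟨u, hTu⟩ : LinearMap.ker T) ∈ LinearMap.ker (Phi T D) := by
      simp only [LinearMap.mem_ker, Phi, LinearMap.comp_apply, Submodule.coe_subtype,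
        Submodule.mkQ_apply, Submodule.Quotient.mk_eq_zero]
      exact hDu
    rw [h] at hmem
    simpa using congrArg Subtype.val hmem
  · intro h
    rw [Submodule.eq_bot_iff]
    rintro ⟨u, hu⟩ hx
    simp only [LinearMap.mem_ker, Phi, LinearMap.comp_apply, Submodule.coe_subtype,
      Submodule.mkQ_apply, Submodule.Quotient.mk_eq_zero] at hx
    have := h u hu hx
    simpa using this

lemma surj_iff (T D : E →ₗ[ℂ] E) : Function.Surjective (Phi T D) ↔
    LinearMap.range T ⊔ Submodule.map D (LinearMap.ker T) = ⊤ := by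
  rw [← LinearMap.range_eq_top]
  unfold Phi
  rw [LinearMap.range_comp, LinearMap.range_comp, Submodule.range_subtype,
    Submodule.map_mkQ_eq_top]

lemma ker_adjoint (T : E →ₗ[ℂ] E) :
    LinearMap.ker (LinearMap.adjoint T) = (LinearMap.range T)ᗮ := by
  ext u
  simp only [LinearMap.mem_ker, Submodule.mem_orthogonal]
  constructor
  · rintro h v ⟨w, rfl⟩
    rw [← LinearMap.adjoint_inner_right, h, inner_zero_right]
  · intro h
    refine ext_inner_left ℂ fun v => ?_
    rw [LinearMap.adjoint_inner_right, inner_zero_right]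
    exact h _ ⟨v, rfl⟩

lemma range_adjoint (T : E →ₗ[ℂ] E) :
    LinearMap.range (LinearMap.adjoint T) = (LinearMap.ker T)ᗮ := by
  have h := ker_adjoint (LinearMap.adjoint T)
  rw [LinearMap.adjoint_adjoint] at h
  rw [h, Submodule.orthogonal_orthogonal]

lemma comap_adjoint (D : E →ₗ[ℂ] E) (K : Submodule ℂ E) :
    Submodule.comap (LinearMap.adjoint D) Kᗮ = (Submodule.map D K)ᗮ := by
  ext u
  simp only [Submodule.mem_comap, Submodule.mem_orthogonal]
  constructor
  · rintro h v ⟨w, hw, rfl⟩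
    rw [← LinearMap.adjoint_inner_right]
    exact h w hw
  · intro h w hw
    rw [LinearMap.adjoint_inner_right]
    exact h _ ⟨w, hw, rfl⟩

lemma injCond_iff_inf (T D : E →ₗ[ℂ] E) : InjCond T D ↔
    LinearMap.ker T ⊓ Submodule.comap D (LinearMap.range T) = ⊥ := by
  rw [Submodule.eq_bot_iff]
  constructor
  · rintro h u ⟨h1, h2⟩
    exact h u h1 h2
  · intro h u h1 h2
    exact h u ⟨h1, h2⟩

/-- Key duality: the principal type map for `T` is bijective iff that of the adjoint is. -/
lemma bij_adjoint_iff (T D : E →ₗ[ℂ] E) :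
    Function.Bijective (Phi T D) ↔
      Function.Bijective (Phi (LinearMap.adjoint T) (LinearMap.adjoint D)) := by
  rw [bij_iff_surj T D, surj_iff, bij_iff_inj, inj_iff, injCond_iff_inf,
    ker_adjoint, range_adjoint, comap_adjoint,
    Submodule.inf_orthogonal, Submodule.orthogonal_eq_bot_iff]

/-- Transfer of the injectivity condition under composition with invertibles. -/
lemma injCond_comp {a b T D a' b' : E →ₗ[ℂ] E} (ha : Function.Injective a)
    (hb : Function.Bijective b) (h : InjCond T D) :
    InjCond (a ∘ₗ T ∘ₗ b) (a' ∘ₗ T ∘ₗ b + a ∘ₗ D ∘ₗ b + a ∘ₗ T ∘ₗ b') := by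
  intro u hTu hDu
  simp only [LinearMap.comp_apply] at hTu
  have h1 : T (b u) = 0 := by
    apply ha
    rw [hTu, map_zero]
  obtain ⟨z, hz⟩ := hDu
  simp only [LinearMap.add_apply, LinearMap.comp_apply, h1, map_zero, zero_add] at hz
  have h2 : a (T (b z)) = a (D (b u) + T (b' u)) := by
    rw [map_add]; exact hz
  have h3 : D (b u) = T (b z - b' u) := by
    have h5 := ha h2
    rw [map_sub]
    exact eq_sub_of_add_eq (by rw [← h5])
  have h4 : b u = 0 := h (b u) h1 ⟨b z - b' u, h3.symm⟩
  apply hb.injective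
  rw [h4, map_zero]

lemma toEuclideanLin_mul (M M' : Matrix (Fin N) (Fin N) ℂ) :
    toEuclideanLin (M * M') = toEuclideanLin M ∘ₗ toEuclideanLin M' := by
  simp [Matrix.toEuclideanLin_eq_toLin, Matrix.toLin_mul _ (PiLp.basisFun 2 ℂ (Fin N)) _]

lemma toEuclideanLin_one :
    toEuclideanLin (1 : Matrix (Fin N) (Fin N) ℂ) = LinearMap.id := by
  simp [Matrix.toEuclideanLin_eq_toLin, Matrix.toLin_one]

lemma bijective_toEuclideanLin_of_isUnit {M : Matrix (Fin N) (Fin N) ℂ} (h : IsUnit M) :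
    Function.Bijective (toEuclideanLin M) := by
  obtain ⟨u, rfl⟩ := h
  refine Function.bijective_iff_has_inverse.mpr ⟨toEuclideanLin (↑u⁻¹ : Matrix _ _ ℂ), ?_, ?_⟩
  · intro x
    have h1 : toEuclideanLin ((↑u⁻¹ : Matrix (Fin N) (Fin N) ℂ) * (↑u : Matrix (Fin N) (Fin N) ℂ)) x = x := by
      rw [u.inv_mul, toEuclideanLin_one, LinearMap.id_apply]
    rw [toEuclideanLin_mul, LinearMap.comp_apply] at h1
    exact h1
  · intro x
    have h1 : toEuclideanLin ((↑u : Matrix (Fin N) (Fin N) ℂ) * (↑u⁻¹ : Matrix (Fin N) (Fin N) ℂ)) x = x := by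
      rw [u.mul_inv, toEuclideanLin_one, LinearMap.id_apply]
    rw [toEuclideanLin_mul, LinearMap.comp_apply] at h1
    exact h1

end PTAux

section DerivLemmas

variable {d N : ℕ}

lemma hasDerivAt_entry (P : EuclideanSpace ℝ (Fin d) → Matrix (Fin N) (Fin N) ℂ)
    (w₀ ν : EuclideanSpace ℝ (Fin d)) (hP : ∀ i j, ContDiffAt ℝ 1 (fun w => P w i j) w₀)
    (i j : Fin N) :
    HasDerivAt (fun t : ℝ => P (w₀ + t • ν) i j) (dirDeriv P w₀ ν i j) 0 := by
  have hline : ContDiffAt ℝ 1 (fun t : ℝ => w₀ + t • ν) 0 :=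
    (contDiff_const.add (contDiff_id.smul contDiff_const)).contDiffAt
  have h0 : (fun t : ℝ => w₀ + t • ν) 0 = w₀ := by simp
  have hg : ContDiffAt ℝ 1 (fun w => P w i j) ((fun t : ℝ => w₀ + t • ν) 0) := by
    simpa using hP i j
  have hcomp : ContDiffAt ℝ 1 ((fun w => P w i j) ∘ fun t : ℝ => w₀ + t • ν) 0 :=
    ContDiffAt.comp 0 hg hline
  simp only [Function.comp_def] at hcomp
  exact (hcomp.differentiableAt one_ne_zero).hasDerivAt

lemma hasDerivAt_matMul {f g : ℝ → Matrix (Fin N) (Fin N) ℂ}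
    {f' g' : Matrix (Fin N) (Fin N) ℂ} {t : ℝ}
    (hf : ∀ i j, HasDerivAt (fun s => f s i j) (f' i j) t)
    (hg : ∀ i j, HasDerivAt (fun s => g s i j) (g' i j) t) (i j : Fin N) :
    HasDerivAt (fun s => (f s * g s) i j) ((f' * g t + f t * g') i j) t := by
  have h : HasDerivAt (fun s => ∑ k, f s i k * g s k j)
      (∑ k, (f' i k * g t k j + f t i k * g' k j)) t :=
    HasDerivAt.fun_sum fun k _ => (hf i k).mul (hg k j)
  have e1 : (fun s => (f s * g s) i j) = fun s => ∑ k, f s i k * g s k j := by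
    funext s; simp [Matrix.mul_apply]
  rw [e1]
  convert h using 1
  simp [Matrix.mul_apply, Matrix.add_apply, Finset.sum_add_distrib]

end DerivLemmas


/-- **Remark 3.2.** If `P` is of principal type at `w₀` and `A`, `B` are `C¹` near `w₀` with
`A(w₀)`, `B(w₀)` invertible, then `A P B` is of principal type at `w₀`. Moreover, `P` is of
principal type at `w₀` if and only if the conjugate transpose `P*` is. -/
theorem principalType_mul_and_adjoint {d N : ℕ}
    (P A B : EuclideanSpace ℝ (Fin d) → Matrix (Fin N) (Fin N) ℂ)
    (w₀ : EuclideanSpace ℝ (Fin d))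
    (hP : ∀ i j, ContDiffAt ℝ 1 (fun w => P w i j) w₀)
    (hA : ∀ i j, ContDiffAt ℝ 1 (fun w => A w i j) w₀)
    (hB : ∀ i j, ContDiffAt ℝ 1 (fun w => B w i j) w₀)
    (hAinv : IsUnit (A w₀)) (hBinv : IsUnit (B w₀)) :
    (IsPrincipalTypeAt P w₀ → IsPrincipalTypeAt (fun w => A w * P w * B w) w₀) ∧
    (IsPrincipalTypeAt P w₀ ↔ IsPrincipalTypeAt (fun w => (P w)ᴴ) w₀) := by
  constructor
  · rintro ⟨ν, hν⟩
    refine ⟨ν, ?_⟩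
    have h0 : w₀ + (0 : ℝ) • ν = w₀ := by simp
    have hPd := hasDerivAt_entry P w₀ ν hP
    have hAd := hasDerivAt_entry A w₀ ν hA
    have hBd := hasDerivAt_entry B w₀ ν hB
    have hAP : ∀ i j, HasDerivAt (fun t : ℝ => (A (w₀ + t • ν) * P (w₀ + t • ν)) i j)
        ((dirDeriv A w₀ ν * P w₀ + A w₀ * dirDeriv P w₀ ν) i j) 0 := by
      intro i j
      have h := hasDerivAt_matMul hAd hPd i j
      rwa [h0] at h
    have hAPB : ∀ i j, HasDerivAt
        (fun t : ℝ => (A (w₀ + t • ν) * P (w₀ + t • ν) * B (w₀ + t • ν)) i j)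
        (((dirDeriv A w₀ ν * P w₀ + A w₀ * dirDeriv P w₀ ν) * B w₀
          + A w₀ * P w₀ * dirDeriv B w₀ ν) i j) 0 := by
      intro i j
      have h := hasDerivAt_matMul hAP hBd i j
      rwa [h0] at h
    have hDD : dirDeriv (fun w => A w * P w * B w) w₀ ν
        = dirDeriv A w₀ ν * P w₀ * B w₀ + A w₀ * dirDeriv P w₀ ν * B w₀
          + A w₀ * P w₀ * dirDeriv B w₀ ν := by
      ext i j
      have h := (hAPB i j).deriv
      simpa [dirDeriv, Matrix.add_mul, add_assoc] using h
    have ha := PTAux.bijective_toEuclideanLin_of_isUnit hAinv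
    have hb := PTAux.bijective_toEuclideanLin_of_isUnit hBinv
    have hν' : Function.Bijective ⇑(PTAux.Phi (toEuclideanLin (P w₀))
        (toEuclideanLin (dirDeriv P w₀ ν))) := hν
    show Function.Bijective ⇑(PTAux.Phi (toEuclideanLin (A w₀ * P w₀ * B w₀))
        (toEuclideanLin (dirDeriv (fun w => A w * P w * B w) w₀ ν)))
    have hQ : toEuclideanLin (A w₀ * P w₀ * B w₀)
        = toEuclideanLin (A w₀) ∘ₗ toEuclideanLin (P w₀) ∘ₗ toEuclideanLin (B w₀) := by
      rw [PTAux.toEuclideanLin_mul, PTAux.toEuclideanLin_mul, LinearMap.comp_assoc]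
    have hDQ : toEuclideanLin (dirDeriv (fun w => A w * P w * B w) w₀ ν)
        = toEuclideanLin (dirDeriv A w₀ ν) ∘ₗ toEuclideanLin (P w₀) ∘ₗ toEuclideanLin (B w₀)
          + toEuclideanLin (A w₀) ∘ₗ toEuclideanLin (dirDeriv P w₀ ν) ∘ₗ toEuclideanLin (B w₀)
          + toEuclideanLin (A w₀) ∘ₗ toEuclideanLin (P w₀) ∘ₗ toEuclideanLin (dirDeriv B w₀ ν) := by
      rw [hDD]
      simp only [map_add, PTAux.toEuclideanLin_mul, LinearMap.comp_assoc]
    rw [PTAux.bij_iff_inj, PTAux.inj_iff, hQ, hDQ]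
    exact PTAux.injCond_comp ha.injective hb
      ((PTAux.inj_iff _ _).mp ((PTAux.bij_iff_inj _ _).mp hν'))
  · have key : ∀ ν, toEuclideanLin (dirDeriv (fun w => (P w)ᴴ) w₀ ν)
        = LinearMap.adjoint (toEuclideanLin (dirDeriv P w₀ ν)) := by
      intro ν
      have hdd : dirDeriv (fun w => (P w)ᴴ) w₀ ν = (dirDeriv P w₀ ν)ᴴ := by
        ext i j
        have h := ((hasDerivAt_entry P w₀ ν hP j i).star).deriv
        simpa [dirDeriv, Matrix.conjTranspose_apply] using h
      rw [hdd, Matrix.toEuclideanLin_conjTranspose_eq_adjoint]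
    constructor
    · rintro ⟨ν, hν⟩
      refine ⟨ν, ?_⟩
      have hν' : Function.Bijective ⇑(PTAux.Phi (toEuclideanLin (P w₀))
          (toEuclideanLin (dirDeriv P w₀ ν))) := hν
      show Function.Bijective ⇑(PTAux.Phi (toEuclideanLin ((P w₀)ᴴ))
          (toEuclideanLin (dirDeriv (fun w => (P w)ᴴ) w₀ ν)))
      rw [key ν, Matrix.toEuclideanLin_conjTranspose_eq_adjoint]
      exact (PTAux.bij_adjoint_iff _ _).mp hν'
    · rintro ⟨ν, hν⟩
      refine ⟨ν, ?_⟩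
      have hν' : Function.Bijective ⇑(PTAux.Phi (toEuclideanLin ((P w₀)ᴴ))
          (toEuclideanLin (dirDeriv (fun w => (P w)ᴴ) w₀ ν))) := hν
      rw [key ν, Matrix.toEuclideanLin_conjTranspose_eq_adjoint] at hν'
      show Function.Bijective ⇑(PTAux.Phi (toEuclideanLin (P w₀))
          (toEuclideanLin (dirDeriv P w₀ ν)))
      exact (PTAux.bij_adjoint_iff _ _).mpr hν'
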